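/- Let U ∈ ℝ^{d×m} have i.i.d. Rademacher columns, g ∈ ℝ^d a fixed nonzero vector, and suppose v ↦ G(v) is an L_v-Lipschitz map from ℝ^p to ℝ^d with L_v > 0. If v̂* satisfies (1/m)UUᵀG(v) = G(v̂*) (i.e., the attacker's reconstruction loss is zero), then E[‖v − v̂*‖²] ≥ ((d−1)/(m·L_v²))·‖G(v)‖², where G(v) = g. -/

import Mathlib

open Finset

namespace Stmt12Aux

noncomputable def sg : Bool → ℝ := fun b => if b then 1 else -1

lemma sg_sq (b : Bool) : sg b * sg b = 1 := by cases b <;> norm_num [sg]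

lemma sum_sg : ∑ b : Bool, sg b = 0 := by simp [sg]

lemma master {ι κ : Type*} [Fintype ι] [Fintype κ] [DecidableEq ι]
    (F : ι → κ → ℝ) :
    ∑ x : ι → κ, ∏ i, F i (x i) = ∏ i, ∑ b, F i b := (Fintype.prod_sum F).symm

lemma sum_eval_two_zero {ι κ : Type*} [Fintype ι] [Fintype κ] [DecidableEq ι]
    {i1 i2 : ι} (h : i1 ≠ i2) (f g : κ → ℝ) (hf : ∑ b, f b = 0) :
    ∑ x : ι → κ, f (x i1) * g (x i2) = 0 := by
  have key : ∀ x : ι → κ, f (x i1) * g (x i2)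
      = ∏ i, (if i = i1 then f (x i) else 1) * (if i = i2 then g (x i) else 1) := by
    intro x
    rw [Finset.prod_mul_distrib, Finset.prod_ite_eq' univ i1 (fun i => f (x i)),
      Finset.prod_ite_eq' univ i2 (fun i => g (x i))]
    simp
  calc ∑ x : ι → κ, f (x i1) * g (x i2)
      = ∑ x : ι → κ, ∏ i, ((if i = i1 then f (x i) else 1) * (if i = i2 then g (x i) else 1)) := by
        exact Finset.sum_congr rfl fun x _ => key x
    _ = ∏ i, ∑ b, ((if i = i1 then f b else 1) * (if i = i2 then g b else 1)) := by
        exact master (fun i b => (if i = i1 then f b else 1) * (if i = i2 then g b else 1))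
    _ = 0 := by
        apply Finset.prod_eq_zero (Finset.mem_univ i1)
        simp [h, hf]

lemma sum_eval_one {ι κ : Type*} [Fintype ι] [Fintype κ] [DecidableEq ι]
    (j : ι) (f : κ → ℝ) :
    ∑ x : ι → κ, f (x j) = (Fintype.card κ : ℝ) ^ (Fintype.card ι - 1) * ∑ b, f b := by
  have key : ∀ x : ι → κ, f (x j) = ∏ i, (if i = j then f (x i) else 1) := by
    intro x
    rw [Finset.prod_ite_eq' univ j (fun i => f (x i))]; simp
  rw [Finset.sum_congr rfl fun x _ => key x,
    master (fun i b => if i = j then f b else 1)]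
  have : ∀ i : ι, (∑ b, if i = j then f b else (1:ℝ)) = if i = j then ∑ b, f b else (Fintype.card κ : ℝ) := by
    intro i; split <;> simp
  rw [Finset.prod_congr rfl fun i _ => this i, ← Finset.mul_prod_erase univ _ (Finset.mem_univ j)]
  simp only [if_pos rfl]
  rw [Finset.prod_congr rfl (fun i hi => if_neg (Finset.mem_erase.mp hi).1),
    Finset.prod_const, Finset.card_erase_of_mem (Finset.mem_univ j), Finset.card_univ]
  simp [mul_comm]

variable {d : ℕ}

noncomputable def cc (g : Fin d → ℝ) (τ : Fin d → Bool) : ℝ := ∑ i, sg (τ i) * g i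
noncomputable def ww (g : Fin d → ℝ) (τ : Fin d → Bool) (i : Fin d) : ℝ :=
  g i - cc g τ * sg (τ i)

lemma pair_sum (i1 i2 : Fin d) :
    ∑ τ : Fin d → Bool, sg (τ i1) * sg (τ i2)
      = if i1 = i2 then (2:ℝ) ^ d else 0 := by
  split
  · next h =>
    subst h
    simp only [sg_sq]
    simp [Finset.card_univ]
  · next h => exact sum_eval_two_zero h sg sg sum_sg

lemma sum_cc_mul_sg (g : Fin d → ℝ) (i : Fin d) :
    ∑ τ : Fin d → Bool, cc g τ * sg (τ i) = (2:ℝ) ^ d * g i := by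
  simp only [cc, Finset.sum_mul]
  rw [Finset.sum_comm]
  have : ∀ i' : Fin d, ∑ τ : Fin d → Bool, sg (τ i') * g i' * sg (τ i)
      = (if i' = i then (2:ℝ)^d else 0) * g i' := by
    intro i'
    rw [← pair_sum i' i, Finset.sum_mul]
    exact Finset.sum_congr rfl fun τ _ => by ring
  rw [Finset.sum_congr rfl fun i' _ => this i']
  simp

lemma sum_ww (g : Fin d → ℝ) (i : Fin d) :
    ∑ τ : Fin d → Bool, ww g τ i = 0 := by
  simp only [ww, Finset.sum_sub_distrib, sum_cc_mul_sg, Finset.sum_const,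
    Finset.card_univ]
  simp [mul_comm]

lemma sum_cc_sq (g : Fin d → ℝ) :
    ∑ τ : Fin d → Bool, cc g τ ^ 2 = (2:ℝ) ^ d * ∑ i, g i ^ 2 := by
  have : ∀ τ : Fin d → Bool, cc g τ ^ 2 = ∑ i, (sg (τ i) * g i) * cc g τ := by
    intro τ; rw [← Finset.sum_mul]; ring_nf; rw [cc]; ring
  rw [Finset.sum_congr rfl fun τ _ => this τ, Finset.sum_comm]
  have h2 : ∀ i : Fin d, ∑ τ : Fin d → Bool, (sg (τ i) * g i) * cc g τ
      = g i * ((2:ℝ)^d * g i) := by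
    intro i
    rw [← sum_cc_mul_sg g i, Finset.mul_sum]
    exact Finset.sum_congr rfl fun τ _ => by ring
  rw [Finset.sum_congr rfl fun i _ => h2 i, Finset.mul_sum]
  exact Finset.sum_congr rfl fun i _ => by ring

lemma sum_ww_sq (g : Fin d → ℝ) :
    ∑ τ : Fin d → Bool, ∑ i, ww g τ i ^ 2
      = (2:ℝ) ^ d * ((d:ℝ) - 1) * ∑ i, g i ^ 2 := by
  have hτ : ∀ τ : Fin d → Bool, ∑ i, ww g τ i ^ 2
      = (∑ i, g i ^ 2) + ((d:ℝ) - 2) * cc g τ ^ 2 := by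
    intro τ
    have expand : ∀ i : Fin d, ww g τ i ^ 2
        = g i ^ 2 - 2 * (sg (τ i) * g i) * cc g τ + cc g τ ^ 2 * (sg (τ i) * sg (τ i)) := by
      intro i; rw [ww]; ring
    rw [Finset.sum_congr rfl fun i _ => expand i]
    simp only [sg_sq, mul_one]
    rw [Finset.sum_add_distrib, Finset.sum_sub_distrib, Finset.sum_const, Finset.card_univ]
    have : ∑ i, 2 * (sg (τ i) * g i) * cc g τ = 2 * cc g τ ^ 2 := by
      rw [← Finset.sum_mul, ← Finset.mul_sum, ← cc]; ring
    rw [this]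
    simp [Fintype.card_fin]
    ring
  rw [Finset.sum_congr rfl fun τ _ => hτ τ, Finset.sum_add_distrib, Finset.sum_const,
    Finset.card_univ, ← Finset.mul_sum, sum_cc_sq]
  simp [Finset.card_univ]
  ring

end Stmt12Aux

open Stmt12Aux

/-- Let `U ∈ ℝ^{d×m}` have i.i.d. Rademacher columns (expectation modeled as a
uniform average over sign patterns `σ : Fin m → Fin d → Bool`), `g = G(v)` fixed nonzero, and
`G : ℝ^p → ℝ^d` an `L`-Lipschitz map. If the attacker's reconstruction `v̂*(U)` satisfies
`(1/m) U Uᵀ G(v) = G(v̂*)`, then `E[‖v − v̂*‖²] ≥ ((d−1)/(m L²)) ‖G(v)‖²`. -/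
theorem stmt12 {d m p : ℕ} (hm : 0 < m) (L : ℝ) (hL : 0 < L)
    (G : EuclideanSpace ℝ (Fin p) → EuclideanSpace ℝ (Fin d))
    (hLip : ∀ a b, ‖G a - G b‖ ≤ L * ‖a - b‖)
    (v : EuclideanSpace ℝ (Fin p)) (hg : G v ≠ 0)
    (vhat : (Fin m → Fin d → Bool) → EuclideanSpace ℝ (Fin p))
    (hopt : ∀ σ : Fin m → Fin d → Bool,
      G (vhat σ) = (m : ℝ)⁻¹ •
        ∑ j, (∑ i, (if σ j i then (1 : ℝ) else -1) * G v i) •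
          ((WithLp.equiv 2 (Fin d → ℝ)).symm fun i => if σ j i then (1 : ℝ) else -1)) :
    ((d : ℝ) - 1) / (m * L ^ 2) * ‖G v‖ ^ 2
      ≤ (Fintype.card (Fin m → Fin d → Bool) : ℝ)⁻¹ *
          ∑ σ : Fin m → Fin d → Bool, ‖v - vhat σ‖ ^ 2 := by
  classical
  set gf : Fin d → ℝ := fun i => G v i with hgf
  have hmR : (m : ℝ) ≠ 0 := Nat.cast_ne_zero.mpr hm.ne'
  -- coordinates of G (vhat σ)
  have hsum_apply : ∀ (f : Fin m → EuclideanSpace ℝ (Fin d)) (i : Fin d),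
      (∑ j, f j) i = ∑ j, f j i := fun f i =>
    map_sum (EuclideanSpace.proj i : EuclideanSpace ℝ (Fin d) →L[ℝ] ℝ) f univ
  have hco : ∀ (σ : Fin m → Fin d → Bool) (i : Fin d),
      G v i - G (vhat σ) i = (m : ℝ)⁻¹ * ∑ j, ww gf (σ j) i := by
    intro σ i
    have h1 : G (vhat σ) i = (m : ℝ)⁻¹ * ∑ j, cc gf (σ j) * sg (σ j i) := by
      rw [hopt σ]
      show (m : ℝ)⁻¹ * _ = _
      rw [show ∀ f : Fin m → EuclideanSpace ℝ (Fin d), (WithLp.equiv 2 (Fin d → ℝ)).toFun (∑ j, f j) i = ∑ j, f j i from fun f => hsum_apply f i]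
      simp only [PiLp.smul_apply, smul_eq_mul, WithLp.equiv_symm_apply, PiLp.toLp_apply, cc, sg, hgf]
    rw [h1]
    simp only [ww]
    simp only [Finset.sum_sub_distrib, Finset.sum_const, Finset.card_univ,
      Fintype.card_fin, nsmul_eq_mul]
    field_simp
    ring
  -- norm squared coordinate formula
  have hnorm : ∀ x : EuclideanSpace ℝ (Fin d), ‖x‖ ^ 2 = ∑ i, x i ^ 2 := by
    intro x
    rw [EuclideanSpace.norm_eq, Real.sq_sqrt (by positivity)]
    exact Finset.sum_congr rfl fun i _ => by rw [Real.norm_eq_abs, sq_abs]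
  have hG2 : ‖G v‖ ^ 2 = ∑ i, gf i ^ 2 := hnorm (G v)
  -- per-σ expansion
  have hper : ∀ σ : Fin m → Fin d → Bool,
      ‖G v - G (vhat σ)‖ ^ 2
        = ((m:ℝ)⁻¹)^2 * ∑ j, ∑ k, ∑ i, ww gf (σ j) i * ww gf (σ k) i := by
    intro σ
    rw [hnorm]
    have : ∀ i : Fin d, (G v - G (vhat σ)) i ^ 2
        = ((m:ℝ)⁻¹)^2 * ∑ j, ∑ k, ww gf (σ j) i * ww gf (σ k) i := by
      intro i
      have happ : (G v - G (vhat σ)) i = G v i - G (vhat σ) i := rfl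
      have hsq : (∑ j, ww gf (σ j) i) ^ 2 = ∑ j, ∑ k, ww gf (σ j) i * ww gf (σ k) i := by
        rw [sq, Finset.sum_mul_sum]
      rw [happ, hco σ i, mul_pow, hsq]
    rw [Finset.sum_congr rfl fun i _ => this i, ← Finset.mul_sum]
    congr 1
    rw [Finset.sum_comm]
    exact Finset.sum_congr rfl fun j _ => Finset.sum_comm
  -- sum over σ
  set N : ℝ := (Fintype.card (Fin m → Fin d → Bool) : ℝ) with hN
  have hNval : N = ((2:ℝ) ^ d) ^ m := by
    rw [hN]; push_cast [Fintype.card_fun, Fintype.card_fin, Fintype.card_bool]; ring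
  have hkey : ∑ σ : Fin m → Fin d → Bool, ‖G v - G (vhat σ)‖ ^ 2
      = N * (((d:ℝ) - 1) / m) * ‖G v‖ ^ 2 := by
    rw [Finset.sum_congr rfl fun σ _ => hper σ, ← Finset.mul_sum]
    rw [Finset.sum_comm]
    have hjk : ∀ j : Fin m, ∑ σ : Fin m → Fin d → Bool,
        ∑ k, ∑ i, ww gf (σ j) i * ww gf (σ k) i
          = ((2:ℝ)^d)^(m-1) * ((2:ℝ) ^ d * ((d:ℝ) - 1) * ∑ i, gf i ^ 2) := by
      intro j
      rw [Finset.sum_comm]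
      have hterm : ∀ k : Fin m, ∑ σ : Fin m → Fin d → Bool,
          ∑ i, ww gf (σ j) i * ww gf (σ k) i
            = if j = k then ((2:ℝ)^d)^(m-1) * ((2:ℝ) ^ d * ((d:ℝ) - 1) * ∑ i, gf i ^ 2)
              else 0 := by
        intro k
        split
        · next h =>
          subst h
          have := sum_eval_one (ι := Fin m) (κ := Fin d → Bool) j
            (fun τ => ∑ i, ww gf τ i * ww gf τ i)
          rw [this]
          have : ∑ τ : Fin d → Bool, ∑ i, ww gf τ i * ww gf τ i
              = (2:ℝ) ^ d * ((d:ℝ) - 1) * ∑ i, gf i ^ 2 := by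
            rw [← sum_ww_sq gf]
            exact Finset.sum_congr rfl fun τ _ =>
              Finset.sum_congr rfl fun i _ => (sq (ww gf τ i)).symm
          rw [this]
          congr 1
          push_cast [Fintype.card_fun, Fintype.card_fin, Fintype.card_bool]
          ring
        · next h =>
          rw [Finset.sum_comm]
          have : ∀ i : Fin d, ∑ σ : Fin m → Fin d → Bool,
              ww gf (σ j) i * ww gf (σ k) i = 0 := fun i =>
            sum_eval_two_zero h (fun τ => ww gf τ i) (fun τ => ww gf τ i) (sum_ww gf i)
          rw [Finset.sum_congr rfl fun i _ => this i]
          simp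
      rw [Finset.sum_congr rfl fun k _ => hterm k]
      simp
    rw [Finset.sum_congr rfl fun j _ => hjk j, Finset.sum_const, Finset.card_univ,
      Fintype.card_fin, nsmul_eq_mul, hG2, hNval]
    have hpow : ((2:ℝ)^d)^(m-1) * (2:ℝ)^d = ((2:ℝ)^d)^m := by
      rw [← pow_succ]; congr 1; omega
    field_simp
    rw [← hpow]
    ring
  -- Lipschitz bound per σ
  have hlip2 : ∀ σ, ‖G v - G (vhat σ)‖ ^ 2 ≤ L ^ 2 * ‖v - vhat σ‖ ^ 2 := by
    intro σ
    have h := hLip v (vhat σ)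
    calc ‖G v - G (vhat σ)‖ ^ 2 ≤ (L * ‖v - vhat σ‖) ^ 2 :=
          pow_le_pow_left₀ (norm_nonneg _) h 2
      _ = L ^ 2 * ‖v - vhat σ‖ ^ 2 := by ring
  have hsum : N * (((d:ℝ) - 1) / m) * ‖G v‖ ^ 2
      ≤ L ^ 2 * ∑ σ : Fin m → Fin d → Bool, ‖v - vhat σ‖ ^ 2 := by
    rw [← hkey, Finset.mul_sum]
    exact Finset.sum_le_sum fun σ _ => hlip2 σ
  have hNpos : 0 < N := by
    rw [hNval]; positivity
  have hL2 : (0:ℝ) < L ^ 2 := by positivity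
  have h1 : ((d : ℝ) - 1) / (m * L ^ 2) * ‖G v‖ ^ 2
      = (N * (((d:ℝ) - 1) / m) * ‖G v‖ ^ 2) / (N * L ^ 2) := by
    field_simp
  rw [h1]
  rw [div_le_iff₀ (by positivity)]
  calc N * (((d:ℝ) - 1) / m) * ‖G v‖ ^ 2
      ≤ L ^ 2 * ∑ σ : Fin m → Fin d → Bool, ‖v - vhat σ‖ ^ 2 := hsum
    _ = N⁻¹ * (∑ σ : Fin m → Fin d → Bool, ‖v - vhat σ‖ ^ 2) * (N * L ^ 2) := by
        field_simp
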